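/- Let d be a positive integer, 0 ≤ r < 1, and let X_1, …, X_n be points of ℝ^d with ‖X_i‖ ≤ 1 for all i. Then the Lebesgue volume of conv(X_1, …, X_n) \ rB_d (the part of the convex hull lying outside the closed ball of radius r centered at the origin) is at most n·γ_d·(1 − r^d)/2^d, where γ_d is the volume of the unit ball in ℝ^d. -/
import Mathlib


open MeasureTheory Metric ENNReal
open scoped RealInnerProductSpace

/-- **Key volume estimate.** If `X_1, …, X_n ∈ B_d` (the closed unit ball of
`ℝ^d`) and `0 ≤ r < 1`, then the Lebesgue volume of the part of
`conv(X_1, …, X_n)` lying outside the closed ball `rB_d` is at most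
`n · γ_d · (1 - r^d) / 2^d`, where `γ_d` is the volume of the unit ball. -/
theorem volume_convexHull_diff_ball_le
    (d : ℕ) (hd : 0 < d) (n : ℕ) (r : ℝ) (hr0 : 0 ≤ r) (hr1 : r < 1)
    (X : Fin n → EuclideanSpace ℝ (Fin d)) (hX : ∀ i, ‖X i‖ ≤ 1) :
    volume (convexHull ℝ (Set.range X) \ closedBall 0 r) ≤
      (n : ℝ≥0∞) * volume (closedBall (0 : EuclideanSpace ℝ (Fin d)) 1) *
        ENNReal.ofReal (1 - r ^ d) / 2 ^ d := by
  set γ := volume (closedBall (0 : EuclideanSpace ℝ (Fin d)) 1) with hγ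
  set c : Fin n → EuclideanSpace ℝ (Fin d) := fun i => (2:ℝ)⁻¹ • X i with hc
  have hnormc : ∀ i, ‖c i‖ = ‖X i‖ / 2 := by
    intro i
    rw [hc]
    simp [norm_smul]
    ring
  -- covering
  have hcover : convexHull ℝ (Set.range X) \ closedBall 0 r ⊆
      ⋃ i, (closedBall (c i) (‖X i‖ / 2) \ closedBall 0 r) := by
    intro x hx
    obtain ⟨hx1, hx2⟩ := hx
    have hex : ∃ i, ‖x‖ ^ 2 ≤ ⟪X i, x⟫ := by
      by_contra h
      push_neg at h
      have hconv : Convex ℝ {y : EuclideanSpace ℝ (Fin d) | ⟪y, x⟫ < ‖x‖ ^ 2} := by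
        apply convex_halfSpace_lt
        exact ⟨fun a b => inner_add_left a b x, fun t a => real_inner_smul_left a x t⟩
      have hsub : Set.range X ⊆ {y : EuclideanSpace ℝ (Fin d) | ⟪y, x⟫ < ‖x‖ ^ 2} := by
        rintro _ ⟨i, rfl⟩
        exact h i
      have := convexHull_min hsub hconv hx1
      simp only [Set.mem_setOf_eq, real_inner_self_eq_norm_sq] at this
      exact lt_irrefl _ this
    obtain ⟨i, hi⟩ := hex
    refine Set.mem_iUnion.2 ⟨i, ⟨?_, hx2⟩⟩
    rw [mem_closedBall, dist_eq_norm]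
    have hsq : ‖x - c i‖ ^ 2 ≤ (‖X i‖ / 2) ^ 2 := by
      have h1 : ‖x - c i‖ ^ 2 = ‖x‖ ^ 2 - 2 * ⟪x, c i⟫ + ‖c i‖ ^ 2 :=
        norm_sub_sq_real x (c i)
      have h2 : ⟪x, c i⟫ = 2⁻¹ * ⟪x, X i⟫ := real_inner_smul_right x (X i) _
      have h3 : ⟪x, X i⟫ = ⟪X i, x⟫ := real_inner_comm (X i) x
      have h4 := hnormc i
      rw [h2, h3, h4] at h1
      linarith [hi]
    have hn : 0 ≤ ‖X i‖ / 2 := by positivity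
    nlinarith [norm_nonneg (x - c i)]
  -- per-index volume bound
  have hbound : ∀ i, volume (closedBall (c i) (‖X i‖ / 2) \ closedBall (0 : EuclideanSpace ℝ (Fin d)) r)
      ≤ γ * ENNReal.ofReal (1 - r ^ d) / 2 ^ d := by
    intro i
    set s := ‖X i‖ with hs
    have hs0 : 0 ≤ s := norm_nonneg _
    have hs1 : s ≤ 1 := hX i
    -- small ball
    set B₂ := closedBall (r • c i) (r * s / 2) with hB₂
    have hsubD : B₂ ⊆ closedBall (c i) (s / 2) := by
      intro y hy
      rw [mem_closedBall] at *
      have hdc : dist (r • c i) (c i) = (1 - r) * (s / 2) := by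
        have hrc1 : r • c i - c i = (r - 1) • c i := by rw [sub_smul, one_smul]
        rw [dist_eq_norm, hrc1, norm_smul, Real.norm_eq_abs,
          abs_of_nonpos (by linarith), hnormc i]
        ring
      calc dist y (c i) ≤ dist y (r • c i) + dist (r • c i) (c i) := dist_triangle _ _ _
        _ ≤ r * s / 2 + (1 - r) * (s / 2) := by rw [hdc]; linarith [hy]
        _ = s / 2 := by ring
    have hsubr : B₂ ⊆ closedBall (0 : EuclideanSpace ℝ (Fin d)) r := by
      intro y hy
      rw [mem_closedBall] at *
      have hrc : ‖r • c i‖ = r * (s / 2) := by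
        rw [norm_smul, Real.norm_eq_abs, abs_of_nonneg hr0, hnormc i]
      calc dist y 0 ≤ dist y (r • c i) + dist (r • c i) 0 := dist_triangle _ _ _
        _ ≤ r * s / 2 + r * (s / 2) := by
            rw [dist_zero_right, hrc]; linarith [hy]
        _ = r * s := by ring
        _ ≤ r * 1 := by nlinarith
        _ = r := mul_one r
    have hdiffsub : closedBall (c i) (s / 2) \ closedBall (0 : EuclideanSpace ℝ (Fin d)) r
        ⊆ closedBall (c i) (s / 2) \ B₂ := fun y hy => ⟨hy.1, fun h => hy.2 (hsubr h)⟩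
    have hfin : volume B₂ ≠ ∞ := (measure_closedBall_lt_top).ne
    have hmd : volume (closedBall (c i) (s / 2) \ B₂)
        = volume (closedBall (c i) (s / 2)) - volume B₂ :=
      measure_diff hsubD measurableSet_closedBall.nullMeasurableSet hfin
    have hrk : Module.finrank ℝ (EuclideanSpace ℝ (Fin d)) = d := finrank_euclideanSpace_fin
    have hvD : volume (closedBall (c i) (s / 2)) = ENNReal.ofReal ((s / 2) ^ d) * γ := by
      rw [hγ, Measure.addHaar_closedBall' volume (c i) (by positivity), hrk]
    have hvB₂ : volume B₂ = ENNReal.ofReal ((r * s / 2) ^ d) * γ := by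
      rw [hB₂, hγ, Measure.addHaar_closedBall' volume _ (by positivity), hrk]
    have hab : (r * s / 2) ^ d ≤ (s / 2) ^ d := by
      apply pow_le_pow_left₀ (by positivity)
      nlinarith
    have key : volume (closedBall (c i) (s / 2)) - volume B₂
        ≤ ENNReal.ofReal ((s / 2) ^ d - (r * s / 2) ^ d) * γ := by
      rw [hvD, hvB₂, tsub_le_iff_right, ← add_mul, ← ENNReal.ofReal_add (by linarith) (by positivity),
        sub_add_cancel]
    have hreal : (s / 2) ^ d - (r * s / 2) ^ d ≤ (1 - r ^ d) / 2 ^ d := by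
      have h1 : (s / 2) ^ d - (r * s / 2) ^ d = s ^ d * (1 - r ^ d) / 2 ^ d := by
        rw [div_pow, div_pow, mul_pow]
        ring
      rw [h1]
      have hsd : s ^ d ≤ 1 := pow_le_one₀ hs0 hs1
      have hrd : 0 ≤ 1 - r ^ d := by
        have := pow_le_one₀ (n := d) hr0 hr1.le
        linarith
      have h2d : (0:ℝ) < 2 ^ d := by positivity
      have h3 : s ^ d * (1 - r ^ d) ≤ 1 - r ^ d := by nlinarith
      exact (div_le_div_iff_of_pos_right h2d).2 h3
    have hofr : ENNReal.ofReal ((1 - r ^ d) / 2 ^ d) = ENNReal.ofReal (1 - r ^ d) / 2 ^ d := by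
      rw [ENNReal.ofReal_div_of_pos (by positivity)]
      congr 1
      rw [ENNReal.ofReal_pow (by norm_num)]
      norm_num
    calc volume (closedBall (c i) (s / 2) \ closedBall (0 : EuclideanSpace ℝ (Fin d)) r)
        ≤ volume (closedBall (c i) (s / 2) \ B₂) := measure_mono hdiffsub
      _ = volume (closedBall (c i) (s / 2)) - volume B₂ := hmd
      _ ≤ ENNReal.ofReal ((s / 2) ^ d - (r * s / 2) ^ d) * γ := key
      _ ≤ ENNReal.ofReal ((1 - r ^ d) / 2 ^ d) * γ := by
          exact mul_le_mul_left (ENNReal.ofReal_le_ofReal hreal) γ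
      _ = γ * ENNReal.ofReal (1 - r ^ d) / 2 ^ d := by
          rw [hofr, mul_comm, mul_div_assoc]
  calc volume (convexHull ℝ (Set.range X) \ closedBall 0 r)
      ≤ volume (⋃ i, (closedBall (c i) (‖X i‖ / 2) \ closedBall 0 r)) := measure_mono hcover
    _ ≤ ∑' i, volume (closedBall (c i) (‖X i‖ / 2) \ closedBall 0 r) := measure_iUnion_le _
    _ ≤ ∑' _i : Fin n, γ * ENNReal.ofReal (1 - r ^ d) / 2 ^ d := ENNReal.tsum_le_tsum hbound
    _ = (n : ℝ≥0∞) * (γ * ENNReal.ofReal (1 - r ^ d) / 2 ^ d) := by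
        rw [tsum_fintype]
        simp [Finset.sum_const, nsmul_eq_mul]
    _ = (n : ℝ≥0∞) * γ * ENNReal.ofReal (1 - r ^ d) / 2 ^ d := by
        simp [mul_div_assoc, mul_assoc]
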